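/- arXiv:0705.0909 — 5 statements merged into one kernel-verified Lean document; each statement's English description precedes it below -/
import Mathlib

section
/- Let f : [0,∞) → [0,1) be continuously differentiable, strictly increasing, with f(0) = 0, f'(0) = 0, f(γ) → 1 as γ → ∞, and S-shaped (convex then concave). Then for any Γ > 0, the equation γ(1 - γ/Γ) f'(γ) = f(γ) has a solution γ* satisfying 0 < γ* < Γ. -/
open Real Set Filter

/-- Existence of the utility-maximizing SINR: for an efficiency function `f`
(continuously differentiable, strictly increasing, `f 0 = 0`, `f' 0 = 0`,
`f → 1` at infinity, values in `[0,1)`, S-shaped) and any `Γ > 0`, the equation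
`γ (1 - γ/Γ) f'(γ) = f γ` has a solution `γ*` with `0 < γ* < Γ`. -/
theorem exists_equilibrium_sinr
    (f : ℝ → ℝ)
    (hC1 : ContDiff ℝ 1 f)
    (hmono : StrictMonoOn f (Ici 0))
    (h0 : f 0 = 0)
    (hd0 : deriv f 0 = 0)
    (hlim : Tendsto f atTop (nhds 1))
    (hrange : ∀ γ : ℝ, 0 ≤ γ → 0 ≤ f γ ∧ f γ < 1)
    (hS : ∃ γ₀ : ℝ, 0 < γ₀ ∧ ConvexOn ℝ (Icc 0 γ₀) f ∧ ConcaveOn ℝ (Ici γ₀) f)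
    (Γ : ℝ) (hΓ : 0 < Γ) :
    ∃ γstar : ℝ, 0 < γstar ∧ γstar < Γ ∧
      γstar * (1 - γstar / Γ) * deriv f γstar = f γstar := by
  have hdiff : Differentiable ℝ f := hC1.differentiable one_ne_zero
  have hderiv_cont : Continuous (deriv f) := hC1.continuous_deriv le_rfl
  set g : ℝ → ℝ := fun x => x * (1 - x / Γ) * deriv f x - f x with hg
  have hgcont : Continuous g := by
    apply Continuous.sub
    · exact (continuous_id.mul (continuous_const.sub
        (continuous_id.div_const Γ))).mul hderiv_cont
    · exact hdiff.continuous
  have hfΓ : 0 < f Γ := by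
    have := hmono (self_mem_Ici) (le_of_lt hΓ : (0:ℝ) ≤ Γ) hΓ
    rwa [h0] at this
  have hgΓ : g Γ < 0 := by
    have : g Γ = -f Γ := by
      simp [hg, div_self (ne_of_gt hΓ)]
    rw [this]; linarith
  by_cases hpos : ∃ γ ∈ Ioo (0:ℝ) Γ, 0 ≤ g γ
  · obtain ⟨γ₀, hγ₀, hgγ₀⟩ := hpos
    have hcont : ContinuousOn g (Icc γ₀ Γ) := hgcont.continuousOn
    have hsub := intermediate_value_Icc' (le_of_lt hγ₀.2) hcont
    have h0mem : (0:ℝ) ∈ Icc (g Γ) (g γ₀) := ⟨le_of_lt hgΓ, hgγ₀⟩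
    obtain ⟨c, hc, hgc⟩ := hsub h0mem
    have heq : c * (1 - c / Γ) * deriv f c = f c := by
      have := hgc
      simp only [hg] at this
      linarith
    refine ⟨c, lt_of_lt_of_le hγ₀.1 hc.1, ?_, heq⟩
    rcases lt_or_eq_of_le hc.2 with h | h
    · exact h
    · exfalso; rw [h] at hgc; rw [hgc] at hgΓ; exact lt_irrefl 0 hgΓ
  · push_neg at hpos
    exfalso
    -- g < 0 on (0, Γ); consider h x = f x * (Γ/x - 1), strictly decreasing there
    set H : ℝ → ℝ := fun x => f x * (Γ / x - 1) with hH
    have hHanti : StrictAntiOn H (Ioo 0 Γ) := by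
      apply strictAntiOn_of_deriv_neg (convex_Ioo 0 Γ)
      · apply ContinuousOn.mul hdiff.continuous.continuousOn
        apply ContinuousOn.sub _ continuousOn_const
        exact continuousOn_const.div continuousOn_id (fun x hx => ne_of_gt hx.1)
      · intro x hx
        rw [interior_Ioo] at hx
        have hx0 : (0:ℝ) < x := hx.1
        have hdH : HasDerivAt H (deriv f x * (Γ / x - 1) + f x * (-Γ / x ^ 2)) x := by
          have h1 : HasDerivAt f (deriv f x) x := (hdiff x).hasDerivAt
          have h2 : HasDerivAt (fun y : ℝ => Γ / y - 1) (-Γ / x ^ 2) x := by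
            have hdv := (hasDerivAt_const x Γ).div (hasDerivAt_id x) (ne_of_gt hx0)
            have : HasDerivAt (fun y : ℝ => Γ / y) ((0 * x - Γ * 1) / x ^ 2) x := hdv
            have h3 : (0 * x - Γ * 1) / x ^ 2 = -Γ / x ^ 2 := by ring
            rw [h3] at this
            simpa using this.sub_const 1
          exact h1.mul h2
        rw [hdH.deriv]
        have hgx : g x < 0 := hpos x hx
        have hgx' : x * (1 - x / Γ) * deriv f x < f x := by
          simpa [hg, sub_neg] using hgx
        have hΓx : 0 < Γ / x - 1 := by
          rw [sub_pos, lt_div_iff₀ hx0]; linarith [hx.2]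
        have hfx : 0 ≤ f x := (hrange x (le_of_lt hx0)).1
        have key : x * (Γ - x) * deriv f x < Γ * f x := by
          have h1 : x * (1 - x / Γ) = x * (Γ - x) / Γ := by field_simp
          rw [h1] at hgx'
          rw [div_mul_eq_mul_div, div_lt_iff₀ hΓ] at hgx'
          linarith [hgx']
        have expand : deriv f x * (Γ / x - 1) + f x * (-Γ / x ^ 2)
            = (x * (Γ - x) * deriv f x - Γ * f x) / x ^ 2 := by
          field_simp; ring
        rw [expand]
        exact div_neg_of_neg_of_pos (by linarith) (by positivity)
    have hc : 0 < f (Γ / 2) := by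
      have := hmono self_mem_Ici (by positivity : (0:ℝ) ≤ Γ / 2) (by positivity)
      rwa [h0] at this
    have hHhalf : H (Γ / 2) = f (Γ / 2) := by
      show f (Γ / 2) * (Γ / (Γ / 2) - 1) = f (Γ / 2)
      have h2 : Γ / (Γ / 2) = 2 := by
        field_simp
      rw [h2]; ring
    -- slope of f at 0 tends to 0
    have hslope : Tendsto (fun x => f x / x) (nhdsWithin 0 (Ioi 0)) (nhds 0) := by
      have hd : HasDerivAt f 0 0 := by
        have := (hdiff 0).hasDerivAt
        rwa [hd0] at this
      have := hasDerivAt_iff_tendsto_slope.mp hd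
      have h2 : Tendsto (slope f 0) (nhdsWithin 0 (Ioi 0)) (nhds 0) :=
        this.mono_left (nhdsWithin_mono 0 (fun x hx => ne_of_gt hx))
      refine h2.congr' ?_
      filter_upwards [self_mem_nhdsWithin] with x hx
      simp [slope_def_field, h0, div_eq_inv_mul]
    have hev1 : ∀ᶠ x in nhdsWithin 0 (Ioi 0), f x / x < f (Γ / 2) / Γ := by
      have hpos' : (0:ℝ) < f (Γ / 2) / Γ := by positivity
      exact hslope.eventually (Filter.Tendsto.eventually_lt_const hpos' tendsto_id)
    have hev2 : ∀ᶠ x in nhdsWithin 0 (Ioi 0), x ∈ Ioo (0:ℝ) (Γ / 2) := by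
      apply Ioo_mem_nhdsGT_of_mem
      exact ⟨le_rfl, by positivity⟩
    obtain ⟨x, hx1, hx2⟩ := (hev1.and hev2).exists
    have hxIoo : x ∈ Ioo (0:ℝ) Γ := ⟨hx2.1, lt_trans hx2.2 (by linarith)⟩
    have hhalfIoo : (Γ / 2) ∈ Ioo (0:ℝ) Γ := ⟨by positivity, by linarith⟩
    have hHgt : H (Γ / 2) < H x := hHanti hxIoo hhalfIoo hx2.2
    rw [hHhalf] at hHgt
    -- H x = f x * (Γ/x - 1), and f x / x < f (Γ/2) / Γ
    have hx0 : (0:ℝ) < x := hx2.1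
    have hfx : 0 ≤ f x := (hrange x (le_of_lt hx0)).1
    have h1 : f x * Γ < f (Γ / 2) * x := by
      rw [div_lt_div_iff₀ hx0 hΓ] at hx1
      linarith
    have h2 : f (Γ / 2) < f x * (Γ / x - 1) := hHgt
    have h3 : f x * (Γ / x - 1) = (f x * Γ - f x * x) / x := by
      field_simp
    rw [h3, lt_div_iff₀ hx0] at h2
    nlinarith
end

section
/- Let K ≥ 1, and for k = 1,…,K let γ_k* > 0, Γ_k > 0, σ² > 0, h_k^{SP} > 0, and h_{kj} ≥ 0 for j ≠ k. Suppose the powers p_k > 0 satisfy the fixed-point equations p_k = γ_k*(Σ_{j≠k} h_{kj} p_j + σ²) / (h_k^{SP}(1 - γ_k*/Γ_k)) for all k, with γ_k* < Γ_k. If additionally h_k^{SP} p_k = q for all k (a common constant q > 0), then q[1 - γ_k*(Γ_k^{-1} + X_k^{-1})] = σ² γ_k* for each k, where X_k^{-1} = Σ_{j≠k} h_{kj}/h_j^{SP}; consequently γ_k*(Γ_k^{-1} + X_k^{-1}) < 1. -/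
open Finset

/-- Necessity direction of the achievability condition: if the powers solve the
Nash fixed-point equations and the received powers `h_k^{SP} p_k` are all equal
to a common `q > 0`, then `q (1 - γ_k*(Γ_k⁻¹ + X_k⁻¹)) = σ² γ_k*` for each `k`,
where `X_k⁻¹ = ∑_{j ≠ k} h_{kj}/h_j^{SP}`; consequently
`γ_k*(Γ_k⁻¹ + X_k⁻¹) < 1`. -/
theorem nash_achievability_necessary
    (K : ℕ) (hK : 1 ≤ K)
    (γstar Γ hSP p : Fin K → ℝ) (h : Fin K → Fin K → ℝ) (σ2 q : ℝ)
    (hσ : 0 < σ2) (hq : 0 < q)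
    (hγ : ∀ k, 0 < γstar k) (hΓ : ∀ k, 0 < Γ k)
    (hhSP : ∀ k, 0 < hSP k) (hp : ∀ k, 0 < p k)
    (hh : ∀ k j, j ≠ k → 0 ≤ h k j)
    (hlt : ∀ k, γstar k < Γ k)
    (hfix : ∀ k, p k =
      γstar k * ((∑ j ∈ Finset.univ.erase k, h k j * p j) + σ2) /
        (hSP k * (1 - γstar k / Γ k)))
    (hcommon : ∀ k, hSP k * p k = q) :
    ∀ k, q * (1 - γstar k * ((Γ k)⁻¹ +
        ∑ j ∈ Finset.univ.erase k, h k j / hSP j)) = σ2 * γstar k ∧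
      γstar k * ((Γ k)⁻¹ + ∑ j ∈ Finset.univ.erase k, h k j / hSP j) < 1 := by
  intro k
  have hd : 0 < 1 - γstar k / Γ k := by
    have : γstar k / Γ k < 1 := (div_lt_one (hΓ k)).2 (hlt k)
    linarith
  have hden : hSP k * (1 - γstar k / Γ k) ≠ 0 := ne_of_gt (mul_pos (hhSP k) hd)
  have heq := hfix k
  rw [eq_div_iff hden] at heq
  have hsum : ∑ j ∈ Finset.univ.erase k, h k j * p j
      = q * ∑ j ∈ Finset.univ.erase k, h k j / hSP j := by
    rw [Finset.mul_sum]
    refine Finset.sum_congr rfl fun j _ => ?_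
    have hj : p j = q / hSP j := by
      rw [eq_div_iff (ne_of_gt (hhSP j))]
      linarith [hcommon j]
    rw [hj]; ring
  rw [hsum] at heq
  have hmain : q * (1 - γstar k * ((Γ k)⁻¹ +
      ∑ j ∈ Finset.univ.erase k, h k j / hSP j)) = σ2 * γstar k := by
    have hqd : q * (1 - γstar k / Γ k) =
        γstar k * (q * ∑ j ∈ Finset.univ.erase k, h k j / hSP j + σ2) := by
      linear_combination heq - (1 - γstar k / Γ k) * (hcommon k)
    have hdiv : γstar k / Γ k = γstar k * (Γ k)⁻¹ := div_eq_mul_inv _ _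
    nlinarith [hqd]
  refine ⟨hmain, ?_⟩
  have : 0 < σ2 * γstar k := mul_pos hσ (hγ k)
  nlinarith [hmain]
end

section
/- Under the hypotheses of the previous statement, the assignment p_k = (1/h_k^{SP}) · σ²γ_k*/(1 - γ_k*(Γ_k^{-1} + X_k^{-1})) is the minimal-power solution: for any other power vector (p_k') achieving γ_k(p') ≥ γ_k* for all k, one has inf_k h_k^{SP} p_k' ≥ q where q = σ²γ_k*/(1 - γ_k*(Γ_k^{-1} + X_k^{-1})). -/
open Finset

/-- Minimality of the equal-received-power solution: if another nonnegative
power vector `p'` achieves `γ_k(p') ≥ γ_k*` for all `k`, then every received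
power `h_k^{SP} p'_k` (hence their infimum) is at least
`q = σ²γ_k*/(1 - γ_k*(Γ_k⁻¹ + X_k⁻¹))`. -/
theorem minimal_power_solution
    (K : ℕ) (hK : 1 ≤ K)
    (γstar Γ hSP : Fin K → ℝ) (h : Fin K → Fin K → ℝ) (σ2 q : ℝ)
    (hσ : 0 < σ2) (hq : 0 < q)
    (hγ : ∀ k, 0 < γstar k) (hΓ : ∀ k, 0 < Γ k)
    (hhSP : ∀ k, 0 < hSP k)
    (hh : ∀ k j, j ≠ k → 0 ≤ h k j)
    (hcond : ∀ k, γstar k * ((Γ k)⁻¹ +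
        ∑ j ∈ Finset.univ.erase k, h k j / hSP j) < 1)
    (hqdef : ∀ k, q = σ2 * γstar k /
        (1 - γstar k * ((Γ k)⁻¹ + ∑ j ∈ Finset.univ.erase k, h k j / hSP j)))
    (p' : Fin K → ℝ) (hp' : ∀ k, 0 ≤ p' k)
    (hach : ∀ k, γstar k ≤ hSP k * p' k /
        ((hSP k / Γ k) * p' k + (∑ j ∈ Finset.univ.erase k, h k j * p' j) + σ2)) :
    (∀ k, q ≤ hSP k * p' k) ∧ q ≤ ⨅ k, hSP k * p' k := by
  have hKne : Nonempty (Fin K) := ⟨⟨0, hK⟩⟩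
  set f : Fin K → ℝ := fun k => hSP k * p' k with hf
  obtain ⟨k0, -, hmin⟩ := Finset.exists_min_image Finset.univ f ⟨⟨0, hK⟩, Finset.mem_univ _⟩
  have hmin' : ∀ j, f k0 ≤ f j := fun j => hmin j (Finset.mem_univ _)
  have hfpos : ∀ k, 0 ≤ f k := fun k => mul_nonneg (hhSP k).le (hp' k)
  have key : q ≤ f k0 := by
    set X : ℝ := ∑ j ∈ Finset.univ.erase k0, h k0 j / hSP j with hX
    have hXnn : 0 ≤ X := Finset.sum_nonneg fun j hj =>
      div_nonneg (hh k0 j (Finset.ne_of_mem_erase hj)) (hhSP j).le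
    set S : ℝ := ∑ j ∈ Finset.univ.erase k0, h k0 j * p' j with hS
    have hSnn : 0 ≤ S := Finset.sum_nonneg fun j hj =>
      mul_nonneg (hh k0 j (Finset.ne_of_mem_erase hj)) (hp' j)
    have hD : 0 < (hSP k0 / Γ k0) * p' k0 + S + σ2 := by
      have : 0 ≤ (hSP k0 / Γ k0) * p' k0 :=
        mul_nonneg (div_nonneg (hhSP k0).le (hΓ k0).le) (hp' k0)
      linarith
    have h1 : γstar k0 * ((hSP k0 / Γ k0) * p' k0 + S + σ2) ≤ f k0 :=
      (le_div_iff₀ hD).mp (hach k0)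
    have hSlb : X * f k0 ≤ S := by
      rw [hS, hX, Finset.sum_mul]
      refine Finset.sum_le_sum fun j hj => ?_
      have hne := Finset.ne_of_mem_erase hj
      have : h k0 j / hSP j * f j = h k0 j * p' j := by
        field_simp [hf, (hhSP j).ne']; ring
      calc h k0 j / hSP j * f k0 ≤ h k0 j / hSP j * f j :=
            mul_le_mul_of_nonneg_left (hmin' j)
              (div_nonneg (hh k0 j hne) (hhSP j).le)
        _ = h k0 j * p' j := this
    have hself : (hSP k0 / Γ k0) * p' k0 = (Γ k0)⁻¹ * f k0 := by
      field_simp [hf]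
      rfl
    have h2 : γstar k0 * (((Γ k0)⁻¹ + X) * f k0 + σ2) ≤ f k0 := by
      have : ((Γ k0)⁻¹ + X) * f k0 + σ2 ≤ (hSP k0 / Γ k0) * p' k0 + S + σ2 := by
        rw [hself]; nlinarith [hSlb]
      calc γstar k0 * (((Γ k0)⁻¹ + X) * f k0 + σ2)
          ≤ γstar k0 * ((hSP k0 / Γ k0) * p' k0 + S + σ2) :=
            mul_le_mul_of_nonneg_left this (hγ k0).le
        _ ≤ f k0 := h1
    have hc : γstar k0 * ((Γ k0)⁻¹ + X) < 1 := hcond k0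
    have hqk : q = σ2 * γstar k0 / (1 - γstar k0 * ((Γ k0)⁻¹ + X)) := hqdef k0
    rw [hqk, div_le_iff₀ (by linarith)]
    nlinarith [h2, hfpos k0]
  have hall : ∀ k, q ≤ f k := fun k => le_trans key (hmin' k)
  exact ⟨hall, le_ciInf hall⟩
end

section
/- Let f be an efficiency function (increasing, S-shaped, continuously differentiable, f(0)=0, f'(0)=0, f(∞)=1) and for Γ > 0 let Γ̂(Γ) denote the solution of γ(1 - γ/Γ)f'(γ) = f(γ) in (0, Γ). Then Γ̂ is monotonically increasing in Γ, and Γ̂(Γ) ≤ γ̄* for all Γ, where γ̄* is the solution of γ f'(γ) = f(γ) (the Γ = ∞ case). -/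
open Set Filter

/-- Monotonicity and boundedness of the equilibrium-SINR map: if `Γ̂ Γ` is,
for each `Γ > 0`, the (unique) solution in `(0, Γ)` of
`γ (1 - γ/Γ) f'(γ) = f γ`, then `Γ̂` is monotonically increasing on `(0, ∞)`
and `Γ̂ Γ ≤ γ̄*`, where `γ̄* > 0` solves `γ f'(γ) = f γ` (the `Γ = ∞` case). -/
theorem equilibrium_sinr_monotone_bounded
    (f : ℝ → ℝ)
    (hC1 : ContDiff ℝ 1 f)
    (hmono : StrictMonoOn f (Ici 0))
    (h0 : f 0 = 0) (hd0 : deriv f 0 = 0)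
    (hlim : Tendsto f atTop (nhds 1))
    (hS : ∃ γ₀ : ℝ, 0 < γ₀ ∧ ConvexOn ℝ (Icc 0 γ₀) f ∧ ConcaveOn ℝ (Ici γ₀) f)
    (Γhat : ℝ → ℝ)
    (hsol : ∀ Γ : ℝ, 0 < Γ → 0 < Γhat Γ ∧ Γhat Γ < Γ ∧
      Γhat Γ * (1 - Γhat Γ / Γ) * deriv f (Γhat Γ) = f (Γhat Γ))
    (huniq : ∀ Γ : ℝ, 0 < Γ → ∀ γ : ℝ, 0 < γ → γ < Γ →
      γ * (1 - γ / Γ) * deriv f γ = f γ → γ = Γhat Γ)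
    (γbar : ℝ) (hγbar : 0 < γbar)
    (hγbareq : γbar * deriv f γbar = f γbar) :
    MonotoneOn Γhat (Ioi 0) ∧ ∀ Γ : ℝ, 0 < Γ → Γhat Γ ≤ γbar := by
  obtain ⟨γ₀, hγ₀, hconv, hconc⟩ := hS
  have hdiff : Differentiable ℝ f := hC1.differentiable one_ne_zero
  have hcd : Continuous (deriv f) := hC1.continuous_deriv le_rfl
  have hfpos : ∀ γ : ℝ, 0 < γ → 0 < f γ := by
    intro γ hγ
    have := hmono (self_mem_Ici) (mem_Ici.2 hγ.le) hγ
    linarith [this, h0.symm ▸ this]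
  -- derivative positive at any positive solution point
  have hderiv_pos : ∀ Γ γ : ℝ, 0 < Γ → 0 < γ → γ < Γ →
      γ * (1 - γ / Γ) * deriv f γ = f γ → 0 < deriv f γ := by
    intro Γ γ hΓ hγ hγΓ heq
    have hcoef : 0 < γ * (1 - γ / Γ) := by
      have h1 : γ / Γ < 1 := (div_lt_one hΓ).2 hγΓ
      nlinarith
    by_contra h
    push_neg at h
    have := mul_nonpos_of_nonneg_of_nonpos hcoef.le h
    rw [heq] at this
    linarith [hfpos γ hγ]
  -- the critical point γbar lies strictly in the concave region
  have hγ₀bar : γ₀ < γbar := by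
    by_contra h
    push_neg at h  -- γbar ≤ γ₀
    set c := deriv f γbar with hc
    have hcval : f γbar = γbar * c := hγbareq.symm
    have hmembar : γbar ∈ Icc (0:ℝ) γ₀ := ⟨hγbar.le, h⟩
    have hkey : ∀ x : ℝ, x ∈ Ioo 0 γbar → f x = c * x := by
      intro x ⟨hx0, hxbar⟩
      have hxmem : x ∈ Icc (0:ℝ) γ₀ := ⟨hx0.le, le_trans hxbar.le h⟩
      -- slope f γbar 0 ≤ slope f γbar x
      have hm0 : (0:ℝ) ∈ Icc (0:ℝ) γ₀ \ {γbar} :=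
        ⟨⟨le_rfl, hγ₀.le⟩, fun hmem => hγbar.ne (mem_singleton_iff.1 hmem)⟩
      have hmx : x ∈ Icc (0:ℝ) γ₀ \ {γbar} :=
        ⟨hxmem, fun hmem => hxbar.ne (mem_singleton_iff.1 hmem)⟩
      have hsm := hconv.slope_mono hmembar hm0 hmx hx0.le
      have hs0 : slope f γbar 0 = c := by
        rw [slope_comm, slope_def_field, h0]
        rw [sub_zero, sub_zero, hcval, mul_div_cancel_left₀ c hγbar.ne']
      -- slope f x γbar ≤ deriv f γbar
      have hub := hconv.slope_le_deriv hxmem hmembar hxbar (hdiff γbar)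
      rw [slope_comm] at hub
      have hseq : slope f γbar x = c := le_antisymm hub (hs0 ▸ hsm)
      rw [slope_comm, slope_def_field] at hseq
      have hne : γbar - x ≠ 0 := by linarith [hxbar]
      field_simp at hseq
      nlinarith [hseq]
    -- slope at 0 is constantly c near 0, so c = deriv f 0 = 0
    have ht1 : Tendsto (slope f 0) (nhdsWithin 0 (Ioi 0)) (nhds 0) := by
      have := hasDerivAt_iff_tendsto_slope.1 (hdiff 0).hasDerivAt
      rw [hd0] at this
      exact this.mono_left (nhdsWithin_mono 0 (fun x hx => ne_of_gt hx))
    have heq' : slope f 0 =ᶠ[nhdsWithin 0 (Ioi 0)] fun _ => c := by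
      filter_upwards [Ioo_mem_nhdsGT_of_mem (⟨le_rfl, hγbar⟩ : (0:ℝ) ∈ Ico 0 γbar)]
        with x hx
      rw [slope_def_field, h0, hkey x hx, sub_zero, sub_zero]
      exact mul_div_cancel_right₀ c hx.1.ne'
    have ht2 : Tendsto (slope f 0) (nhdsWithin 0 (Ioi 0)) (nhds c) :=
      Tendsto.congr' heq'.symm tendsto_const_nhds
    have hc0 : c = 0 := tendsto_nhds_unique ht2 ht1
    have : f γbar = 0 := by rw [hcval, hc0, mul_zero]
    linarith [hfpos γbar hγbar]
  -- boundedness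
  have hbound : ∀ Γ : ℝ, 0 < Γ → Γhat Γ ≤ γbar := by
    intro Γ hΓ
    obtain ⟨ha0, haΓ, haeq⟩ := hsol Γ hΓ
    set a := Γhat Γ with ha
    by_contra h
    push_neg at h  -- γbar < a
    have hd : 0 < deriv f a := hderiv_pos Γ a hΓ ha0 haΓ haeq
    have hha : 0 < a * deriv f a - f a := by
      rw [← haeq]
      have : a * deriv f a - a * (1 - a / Γ) * deriv f a = a * (a / Γ) * deriv f a := by
        ring
      rw [this]
      have : 0 < a / Γ := div_pos ha0 hΓ
      positivity
    -- concavity on [γ₀, ∞)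
    have hmembar : γbar ∈ Ici γ₀ := le_of_lt hγ₀bar
    have hmema : a ∈ Ici γ₀ := le_of_lt (lt_trans hγ₀bar h)
    have hcx : ConvexOn ℝ (Ici γ₀) (-f) := hconc.neg
    have e1 : deriv (-f) γbar ≤ slope (-f) γbar a :=
      hcx.deriv_le_slope hmembar hmema h (hdiff γbar).neg
    have e2 : slope (-f) γbar a ≤ deriv (-f) a :=
      hcx.slope_le_deriv hmembar hmema h (hdiff a).neg
    have hdn : ∀ x : ℝ, deriv (-f) x = -deriv f x := by
      intro x
      have : (-f) = fun y => -f y := rfl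
      rw [this, deriv.fun_neg]
    simp only [hdn, slope_neg_fun, Pi.neg_apply, neg_le_neg_iff] at e1 e2
    rw [slope_def_field] at e1 e2
    -- e1 : slope ≤ deriv f γbar,  e2 : deriv f a ≤ slope
    have hab : 0 < a - γbar := by linarith
    rw [div_le_iff₀ hab] at e1
    rw [le_div_iff₀ hab] at e2
    -- f a - f γbar ≥ deriv f a * (a - γbar), f a - f γbar ≤ deriv f γbar * (a - γbar)
    have hdc : deriv f a ≤ deriv f γbar := by nlinarith
    nlinarith [mul_le_mul_of_nonneg_left hdc hγbar.le, hγbareq]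
  refine ⟨?_, hbound⟩
  -- monotonicity
  intro Γ₁ h1 Γ₂ h2 h12
  rw [mem_Ioi] at h1 h2
  rcases eq_or_lt_of_le h12 with rfl | hlt
  · exact le_rfl
  · obtain ⟨ha0, haΓ, haeq⟩ := hsol Γ₁ h1
    obtain ⟨hb0, hbΓ, hbeq⟩ := hsol Γ₂ h2
    by_contra hba
    push_neg at hba  -- Γhat Γ₂ < Γhat Γ₁
    set a := Γhat Γ₁ with haa
    set b := Γhat Γ₂ with hbb
    have hd : 0 < deriv f a := hderiv_pos Γ₁ a h1 ha0 haΓ haeq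
    set ψ : ℝ → ℝ := fun γ => γ * (1 - γ / Γ₂) * deriv f γ - f γ with hψ
    have hcont : Continuous ψ := by
      apply Continuous.sub _ hdiff.continuous
      exact (continuous_id.mul (continuous_const.sub (continuous_id.div_const Γ₂))).mul hcd
    have hψa : 0 < ψ a := by
      simp only [hψ]
      rw [show a * (1 - a / Γ₂) * deriv f a - f a
          = a * (1 - a / Γ₂) * deriv f a - a * (1 - a / Γ₁) * deriv f a by rw [haeq],
        show a * (1 - a / Γ₂) * deriv f a - a * (1 - a / Γ₁) * deriv f a
          = a * (a / Γ₁ - a / Γ₂) * deriv f a by ring]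
      have hdd : a / Γ₂ < a / Γ₁ := by
        apply div_lt_div_of_pos_left ha0 h1 hlt
      exact mul_pos (mul_pos ha0 (by linarith)) hd
    have hψΓ : ψ Γ₂ < 0 := by
      simp only [hψ]
      rw [div_self h2.ne']
      simpa using hfpos Γ₂ h2
    have haΓ₂ : a < Γ₂ := lt_trans haΓ hlt
    obtain ⟨c, hcmem, hceq⟩ :=
      intermediate_value_Ioo' haΓ₂.le hcont.continuousOn (⟨hψΓ, hψa⟩ : (0:ℝ) ∈ Ioo (ψ Γ₂) (ψ a))
    have hceq' : c * (1 - c / Γ₂) * deriv f c = f c := by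
      have : ψ c = 0 := hceq
      simp only [hψ] at this
      linarith
    have := huniq Γ₂ h2 c (lt_trans ha0 hcmem.1) hcmem.2 hceq'
    rw [← hbb] at this
    linarith [hcmem.1]
end

section
/- Let g : (0,∞) → (0,∞) be defined by g(γ) = γ/(C - γ) for γ ∈ (0, C) with C > 0 (and extend monotonically). Suppose two power vectors p, p' are both Nash equilibria of a game where each best response has the form BR_k(p_{-k}) = min(p_max, c_k · (Σ_{j≠k} h_{kj} p_j + σ²)) with constants c_k > 0, h_{kj} ≥ 0, σ² > 0. Then the best response map p ↦ (BR_1(p_{-1}), …, BR_K(p_{-K})) is a standard interference function (positive, monotone, and scalable: BR(μp) < μ·BR(p) for μ > 1 componentwise), and hence has at most one fixed point. -/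
open Finset

/-- The best-response map `BR_k(p) = min(p_max, c_k (∑_{j≠k} h_{kj} p_j + σ²))`
is a standard interference function on nonnegative power vectors — positive,
monotone, and scalable (`BR(μ p) < μ BR(p)` componentwise for `μ > 1`) — and
consequently it has at most one (nonnegative) fixed point, i.e. the Nash
equilibrium is unique. -/
theorem best_response_standard_unique
    (K : ℕ) (hK : 1 ≤ K)
    (pmax σ2 : ℝ) (hpmax : 0 < pmax) (hσ : 0 < σ2)
    (c : Fin K → ℝ) (hc : ∀ k, 0 < c k)
    (h : Fin K → Fin K → ℝ) (hh : ∀ k j, j ≠ k → 0 ≤ h k j)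
    (BR : (Fin K → ℝ) → Fin K → ℝ)
    (hBR : ∀ p k, BR p k =
      min pmax (c k * ((∑ j ∈ Finset.univ.erase k, h k j * p j) + σ2))) :
    (∀ p : Fin K → ℝ, (∀ j, 0 ≤ p j) → ∀ k, 0 < BR p k) ∧
    (∀ p q : Fin K → ℝ, (∀ j, 0 ≤ p j) → (∀ j, p j ≤ q j) →
      ∀ k, BR p k ≤ BR q k) ∧
    (∀ μ : ℝ, 1 < μ → ∀ p : Fin K → ℝ, (∀ j, 0 ≤ p j) →
      ∀ k, BR (fun j => μ * p j) k < μ * BR p k) ∧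
    (∀ p p' : Fin K → ℝ, (∀ j, 0 ≤ p j) → (∀ j, 0 ≤ p' j) →
      (∀ k, p k = BR p k) → (∀ k, p' k = BR p' k) → p = p') := by
  have sum_nonneg : ∀ (p : Fin K → ℝ), (∀ j, 0 ≤ p j) → ∀ k,
      0 ≤ ∑ j ∈ Finset.univ.erase k, h k j * p j := by
    intro p hp k
    refine Finset.sum_nonneg fun j hj => mul_nonneg (hh k j (Finset.mem_erase.mp hj).1) (hp j)
  have pos : ∀ p : Fin K → ℝ, (∀ j, 0 ≤ p j) → ∀ k, 0 < BR p k := by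
    intro p hp k
    rw [hBR]
    exact lt_min hpmax (mul_pos (hc k) (by linarith [sum_nonneg p hp k]))
  have mono : ∀ p q : Fin K → ℝ, (∀ j, 0 ≤ p j) → (∀ j, p j ≤ q j) →
      ∀ k, BR p k ≤ BR q k := by
    intro p q hp hpq k
    rw [hBR, hBR]
    refine min_le_min le_rfl (mul_le_mul_of_nonneg_left ?_ (hc k).le)
    refine add_le_add (Finset.sum_le_sum fun j hj => ?_) le_rfl
    exact mul_le_mul_of_nonneg_left (hpq j) (hh k j (Finset.mem_erase.mp hj).1)
  have scal : ∀ μ : ℝ, 1 < μ → ∀ p : Fin K → ℝ, (∀ j, 0 ≤ p j) →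
      ∀ k, BR (fun j => μ * p j) k < μ * BR p k := by
    intro μ hμ p hp k
    rw [hBR, hBR]
    have hS := sum_nonneg p hp k
    have h1 : ∑ j ∈ Finset.univ.erase k, h k j * (μ * p j)
        = μ * ∑ j ∈ Finset.univ.erase k, h k j * p j := by
      rw [Finset.mul_sum]; exact Finset.sum_congr rfl fun j _ => by ring
    rw [mul_min_of_nonneg _ _ (by linarith : (0:ℝ) ≤ μ)]
    refine lt_min (lt_of_le_of_lt (min_le_left _ _) (by nlinarith)) ?_
    refine lt_of_le_of_lt (min_le_right _ _) ?_
    rw [h1]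
    nlinarith [mul_pos (sub_pos.mpr hμ) (mul_pos (hc k) hσ)]
  refine ⟨pos, mono, scal, ?_⟩
  intro p p' hp hp' hfp hfp'
  have hne : (Finset.univ : Finset (Fin K)).Nonempty := by
    exact ⟨⟨0, hK⟩, Finset.mem_univ _⟩
  have key : ∀ q q' : Fin K → ℝ, (∀ j, 0 ≤ q j) → (∀ j, 0 ≤ q' j) →
      (∀ k, q k = BR q k) → (∀ k, q' k = BR q' k) → ∀ k, q' k ≤ q k := by
    intro q q' hq hq' hf hf' k
    have hqpos : ∀ j, 0 < q j := fun j => (hf j) ▸ pos q hq j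
    set μ := Finset.univ.sup' hne (fun j => q' j / q j) with hμdef
    by_cases hμ1 : μ ≤ 1
    · have := Finset.le_sup' (fun j => q' j / q j) (Finset.mem_univ k)
      have : q' k / q k ≤ 1 := le_trans this hμ1
      exact (div_le_one (hqpos k)).mp this
    · push_neg at hμ1
      exfalso
      obtain ⟨k0, _, hk0⟩ := Finset.exists_mem_eq_sup' hne (fun j => q' j / q j)
      have hle : ∀ j, q' j ≤ μ * q j := by
        intro j
        have := Finset.le_sup' (fun j => q' j / q j) (Finset.mem_univ j)
        rw [← hμdef] at this
        calc q' j = q' j / q j * q j := (div_mul_cancel₀ _ (hqpos j).ne').symm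
          _ ≤ μ * q j := mul_le_mul_of_nonneg_right this (hqpos j).le
      have heq : q' k0 = μ * q k0 := by
        rw [hμdef, hk0, div_mul_cancel₀ _ (hqpos k0).ne']
      have h2 : q' k0 ≤ BR (fun j => μ * q j) k0 := by
        rw [hf' k0]; exact mono q' _ hq' hle k0
      have h3 : BR (fun j => μ * q j) k0 < μ * BR q k0 := scal μ hμ1 q hq k0
      rw [← hf k0] at h3
      linarith
  funext k
  exact le_antisymm (key p' p hp' hp hfp' hfp k) (key p p' hp hp' hfp hfp' k)
end
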